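/- arXiv:2003.07909 — 3 statements merged into one kernel-verified Lean document; each statement's English description precedes it below -/
import Mathlib

section
/- For two indecomposable nilpotent representations U_i(ℓ) and U_j(k) of the equioriented cycle on n vertices, the dimension of the space of morphisms from U_i(ℓ) to U_j(k) equals the number of occurrences of the residue j+k-1 (mod n) among the residues i, i+1, ..., i+m-1 (mod n), where m = min(ℓ,k). -/
open Module

/-- A representation of the equioriented cycle quiver `Δ_n` on vertex set `ZMod n`,
with arrows `i → i+1`. -/
structure CycRep (n : ℕ) where
  V : ZMod n → Type
  [acg : ∀ i, AddCommGroup (V i)]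
  [mod : ∀ i, Module ℂ (V i)]
  f : ∀ i, V i →ₗ[ℂ] V (i + 1)

attribute [instance] CycRep.acg CycRep.mod

/-- The space of morphisms of representations of the cycle, as a submodule of the
product of the spaces of linear maps over each vertex. -/
def CycRep.homSubmodule {n : ℕ} (U W : CycRep n) :
    Submodule ℂ (∀ i, U.V i →ₗ[ℂ] W.V i) where
  carrier := {φ | ∀ i, (W.f i).comp (φ i) = (φ (i + 1)).comp (U.f i)}
  add_mem' := by
    intro a b ha hb i
    simp only [Pi.add_apply, LinearMap.comp_add, LinearMap.add_comp, ha i, hb i]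
  zero_mem' := by
    intro i
    simp
  smul_mem' := by
    intro c a ha i
    simp only [Pi.smul_apply, LinearMap.comp_smul, LinearMap.smul_comp, ha i]

/-- `dim Hom(U, W)` for representations of the cycle. -/
noncomputable def CycRep.homDim {n : ℕ} (U W : CycRep n) : ℕ :=
  Module.finrank ℂ (U.homSubmodule W)

/-- The dimension vector. -/
noncomputable def CycRep.dimVec {n : ℕ} (U : CycRep n) (i : ZMod n) : ℕ :=
  Module.finrank ℂ (U.V i)

/-- Isomorphism of representations of the cycle. -/
def CycRep.Iso {n : ℕ} (U W : CycRep n) : Prop :=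
  ∃ φ : ∀ i, U.V i ≃ₗ[ℂ] W.V i, ∀ (i) (v : U.V i), φ (i + 1) (U.f i v) = W.f i (φ i v)

/-- Direct sum of a (finite) family of representations of the cycle. -/
def CycRep.dSum {n : ℕ} {ι : Type} (F : ι → CycRep n) : CycRep n where
  V i := ∀ a, (F a).V i
  f i := LinearMap.pi fun a => ((F a).f i).comp (LinearMap.proj a)

/-- Binary direct sum. -/
def CycRep.dsum2 {n : ℕ} (U W : CycRep n) : CycRep n where
  V i := U.V i × W.V i
  f i := (U.f i).prodMap (W.f i)

/-- The subrepresentation determined by a stable tuple of subspaces. -/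
def CycRep.subRep {n : ℕ} (M : CycRep n) (W : ∀ i, Submodule ℂ (M.V i))
    (h : ∀ i, (W i).map (M.f i) ≤ W (i + 1)) : CycRep n where
  V i := W i
  f i := (M.f i).restrict fun x hx => h i (Submodule.mem_map_of_mem hx)

/-- Transport along an equality of vertices. -/
def CycRep.castV {n : ℕ} (U : CycRep n) {i j : ZMod n} (h : i = j) :
    U.V i →ₗ[ℂ] U.V j := h ▸ LinearMap.id

/-- The composite linear map along the unique path of length `N` starting at vertex `i`. -/
noncomputable def CycRep.pathMap {n : ℕ} (U : CycRep n) :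
    (N : ℕ) → (i : ZMod n) → (U.V i →ₗ[ℂ] U.V (i + (N : ZMod n)))
  | 0, i => U.castV (by simp)
  | (N + 1), i =>
      (U.castV (show i + 1 + (N : ZMod n) = i + ((N + 1 : ℕ) : ZMod n) by
        push_cast; ring)) ∘ₗ (U.pathMap N (i + 1)) ∘ₗ U.f i

/-- The indecomposable nilpotent representation `U_i(ℓ)` of the cycle: basis vectors
`b_0, …, b_{ℓ-1}`, `b_t` over vertex `i + t`, arrows sending `b_t ↦ b_{t+1}`, `b_{ℓ-1} ↦ 0`. -/
noncomputable def stdRep (n : ℕ) (i : ZMod n) (ℓ : ℕ) : CycRep n where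
  V j := {t : Fin ℓ // i + (t.1 : ZMod n) = j} → ℂ
  f j :=
    { toFun := fun g s =>
        if h : s.1.1 ≠ 0 then
          g ⟨⟨s.1.1 - 1, by have := s.1.isLt; omega⟩, by
            have hs := s.2
            have h1 : (1 : ℕ) ≤ s.1.1 := Nat.one_le_iff_ne_zero.mpr h
            have hc : ((s.1.1 - 1 : ℕ) : ZMod n) = (s.1.1 : ZMod n) - 1 := by
              rw [Nat.cast_sub h1, Nat.cast_one]
            rw [hc]
            linear_combination hs⟩
        else 0
      map_add' := by
        intro a b
        funext s
        by_cases h : s.1.1 = 0 <;> simp [h]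
      map_smul' := by
        intro c a
        funext s
        by_cases h : s.1.1 = 0 <;> simp [h] }

/-- `U(j; ℓ)`: the indecomposable nilpotent representation of length `ℓ` ending at vertex `j`. -/
noncomputable def endRep (n : ℕ) (ℓ : ℕ) (j : ZMod n) : CycRep n :=
  stdRep n (j - (ℓ : ZMod n) + 1) ℓ

/-- `⊕_{i} U_i(N)^{x_i}`. -/
noncomputable def repX (n N : ℕ) (x : ZMod n → ℕ) : CycRep n :=
  CycRep.dSum fun p : Σ i : ZMod n, Fin (x i) => stdRep n p.1 N


section HuberyAux

variable {n : ℕ} [NeZero n] (i j : ZMod n) (ℓ k : ℕ)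

/-- The coefficient space indexing a basis of `Hom(U_i(ℓ), U_j(k))`. -/
abbrev HCoef : Type :=
  {t : Fin (min ℓ k) // i + (t.1 : ZMod n) = j + (k : ZMod n) - 1} → ℂ

/-- The matrix entry of a morphism `φ`, at vertex `v`, row `s`, column `t`. -/
noncomputable def aph (φ : ∀ v, (stdRep n i ℓ).V v →ₗ[ℂ] (stdRep n j k).V v)
    (v : ZMod n) (t : Fin ℓ) (s : Fin k)
    (ht : i + (t.1 : ZMod n) = v) (hs : j + (s.1 : ZMod n) = v) : ℂ :=
  φ v (Pi.single ⟨t, ht⟩ 1) ⟨s, hs⟩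

lemma aph_congr (φ : ∀ v, (stdRep n i ℓ).V v →ₗ[ℂ] (stdRep n j k).V v)
    {v v' : ZMod n} {t t' : Fin ℓ} {s s' : Fin k}
    (hv : v = v') (htt : t = t') (hss : s = s')
    (ht : i + (t.1 : ZMod n) = v) (hs : j + (s.1 : ZMod n) = v)
    (ht' : i + (t'.1 : ZMod n) = v') (hs' : j + (s'.1 : ZMod n) = v') :
    aph i j ℓ k φ v t s ht hs = aph i j ℓ k φ v' t' s' ht' hs' := by
  subst hv; subst htt; subst hss; rfl

/-- The explicit matrix entry built from coefficients `c`. -/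
noncomputable def ent (c : HCoef i j ℓ k) (t : Fin ℓ) (s : Fin k)
    (hv : j + (s.1 : ZMod n) = i + (t.1 : ZMod n)) : ℂ :=
  if h2 : t.1 ≤ s.1 ∧ k + t.1 ≤ ℓ + s.1 then
    c ⟨⟨k - 1 - (s.1 - t.1), by
        have := s.isLt; have := t.isLt; omega⟩, by
      have hks : 1 + (s.1 - t.1) ≤ k := by have := s.isLt; omega
      have e1 : k - 1 - (s.1 - t.1) = k - (1 + (s.1 - t.1)) := by omega
      show i + ((k - 1 - (s.1 - t.1) : ℕ) : ZMod n) = j + (k : ZMod n) - 1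
      rw [e1, Nat.cast_sub hks, Nat.cast_add, Nat.cast_one, Nat.cast_sub h2.1]
      linear_combination -hv⟩
  else 0

lemma ent_succ (c : HCoef i j ℓ k) (t : ℕ) (ht : t + 1 < ℓ) (s : Fin k)
    (hs0 : s.1 ≠ 0)
    (hv : j + (s.1 : ZMod n) = i + (((t : ℕ) + 1 : ℕ) : ZMod n))
    (hv' : j + (((s.1 - 1 : ℕ)) : ZMod n) = i + ((t : ℕ) : ZMod n)) :
    ent i j ℓ k c ⟨t + 1, ht⟩ s hv
      = ent i j ℓ k c ⟨t, by omega⟩ ⟨s.1 - 1, by have := s.isLt; omega⟩ hv' := by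
  unfold ent
  by_cases h : t + 1 ≤ s.1 ∧ k + (t + 1) ≤ ℓ + s.1
  · rw [dif_pos h, dif_pos (by omega : t ≤ s.1 - 1 ∧ k + t ≤ ℓ + (s.1 - 1))]
    refine congrArg c (Subtype.ext (Fin.ext ?_))
    show k - 1 - (s.1 - (t + 1)) = k - 1 - (s.1 - 1 - t)
    omega
  · rw [dif_neg h, dif_neg (show ¬(t ≤ s.1 - 1 ∧ k + t ≤ ℓ + (s.1 - 1)) from by omega)]

lemma ent_zero_right (c : HCoef i j ℓ k) (t : ℕ) (ht : t + 1 < ℓ) (s : Fin k)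
    (hs0 : s.1 = 0) (hv : j + (s.1 : ZMod n) = i + (((t : ℕ) + 1 : ℕ) : ZMod n)) :
    ent i j ℓ k c ⟨t + 1, ht⟩ s hv = 0 := by
  unfold ent
  rw [dif_neg (show ¬(t + 1 ≤ s.1 ∧ k + (t + 1) ≤ ℓ + s.1) from by omega)]

lemma ent_top (c : HCoef i j ℓ k) (t : ℕ) (ht : t < ℓ) (htop : ¬ (t + 1 < ℓ))
    (s : Fin k) (hs : s.1 + 1 < k)
    (hv : j + (s.1 : ZMod n) = i + ((t : ℕ) : ZMod n)) :
    ent i j ℓ k c ⟨t, ht⟩ s hv = 0 := by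
  unfold ent
  rw [dif_neg (show ¬(t ≤ s.1 ∧ k + t ≤ ℓ + s.1) from by have := s.isLt; omega)]

/-- Summand in the definition of the explicit morphism. -/
noncomputable def Fsummand (c : HCoef i j ℓ k) (v : ZMod n)
    (g : {t : Fin ℓ // i + (t.1 : ZMod n) = v} → ℂ) (s : Fin k)
    (hs : j + (s.1 : ZMod n) = v) (t : ℕ) : ℂ :=
  if h : t < ℓ ∧ i + ((t : ℕ) : ZMod n) = v then
    ent i j ℓ k c ⟨t, h.1⟩ s (hs.trans h.2.symm) * g ⟨⟨t, h.1⟩, h.2⟩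
  else 0

/-- The explicit morphism built from coefficients `c`. -/
noncomputable def Fmap (c : HCoef i j ℓ k) (v : ZMod n) :
    (stdRep n i ℓ).V v →ₗ[ℂ] (stdRep n j k).V v where
  toFun g s := ∑ t ∈ Finset.range ℓ, Fsummand i j ℓ k c v g s.1 s.2 t
  map_add' a b := by
    funext s
    show (∑ t ∈ Finset.range ℓ, Fsummand i j ℓ k c v (a + b) s.1 s.2 t)
      = (∑ t ∈ Finset.range ℓ, Fsummand i j ℓ k c v a s.1 s.2 t)
        + (∑ t ∈ Finset.range ℓ, Fsummand i j ℓ k c v b s.1 s.2 t)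
    rw [← Finset.sum_add_distrib]
    refine Finset.sum_congr rfl fun t _ => ?_
    unfold Fsummand
    split
    · show _ * ((a _) + (b _)) = _
      ring
    · rw [add_zero]
  map_smul' r a := by
    funext s
    show (∑ t ∈ Finset.range ℓ, Fsummand i j ℓ k c v (r • a) s.1 s.2 t)
      = r * (∑ t ∈ Finset.range ℓ, Fsummand i j ℓ k c v a s.1 s.2 t)
    rw [Finset.mul_sum]
    refine Finset.sum_congr rfl fun t _ => ?_
    unfold Fsummand
    split
    · show _ * (r * (a _)) = _
      ring
    · rw [mul_zero]

lemma f_single (v : ZMod n) (t : Fin ℓ) (ht : i + (t.1 : ZMod n) = v) :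
    (stdRep n i ℓ).f v (Pi.single ⟨t, ht⟩ 1) =
      if h : t.1 + 1 < ℓ then
        Pi.single (⟨⟨t.1 + 1, h⟩, by push_cast; rw [← ht]; ring⟩ :
          {u : Fin ℓ // i + (u.1 : ZMod n) = v + 1}) 1
      else 0 := by
  by_cases h : t.1 + 1 < ℓ
  · rw [dif_pos h]
    funext u
    obtain ⟨⟨uv, huv⟩, hu⟩ := u
    match uv, huv, hu with
    | 0, huv, hu =>
      show (0 : ℂ) = _
      rw [Pi.single_apply, if_neg]
      intro hc
      exact absurd (congrArg (fun z => z.1.1) hc) (by simp)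
    | (x + 1), huv, hu =>
      show Pi.single (⟨t, ht⟩ : {u : Fin ℓ // i + (u.1 : ZMod n) = v}) 1
          ⟨⟨x, by omega⟩, by
            push_cast at hu ⊢
            linear_combination hu⟩ = _
      rw [Pi.single_apply, Pi.single_apply]
      by_cases hx : x = t.1
      · subst hx
        rw [if_pos rfl, if_pos rfl]
      · rw [if_neg (fun hc => hx (by simpa using congrArg (fun z => z.1.1) hc)),
          if_neg (fun hc => hx (by
            have := congrArg (fun z => z.1.1) hc
            simpa using this))]
  · rw [dif_neg h]
    funext u
    obtain ⟨⟨uv, huv⟩, hu⟩ := u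
    match uv, huv, hu with
    | 0, huv, hu => rfl
    | (x + 1), huv, hu =>
      show Pi.single (⟨t, ht⟩ : {u : Fin ℓ // i + (u.1 : ZMod n) = v}) 1
          ⟨⟨x, by omega⟩, by
            push_cast at hu ⊢
            linear_combination hu⟩ = 0
      rw [Pi.single_apply, if_neg]
      intro hc
      have hxt := congrArg (fun z => z.1.1) hc
      simp only at hxt
      omega

lemma rel (φ : ∀ v, (stdRep n i ℓ).V v →ₗ[ℂ] (stdRep n j k).V v)
    (hφ : φ ∈ (stdRep n i ℓ).homSubmodule (stdRep n j k)) (v : ZMod n)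
    (t : Fin ℓ) (s : Fin k) (ht : i + (t.1 : ZMod n) = v)
    (hs : j + (s.1 : ZMod n) = v + 1) :
    (if h : s.1 ≠ 0 then
        aph i j ℓ k φ v t ⟨s.1 - 1, by have := s.isLt; omega⟩ ht (by
          have h1 : (1 : ℕ) ≤ s.1 := Nat.one_le_iff_ne_zero.mpr h
          show j + ((s.1 - 1 : ℕ) : ZMod n) = v
          rw [Nat.cast_sub h1, Nat.cast_one]
          linear_combination hs) else 0)
      = (if h : t.1 + 1 < ℓ then
          aph i j ℓ k φ (v + 1) ⟨t.1 + 1, h⟩ s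
            (by push_cast; rw [← ht]; ring) hs else 0) := by
  have H := congrFun (LinearMap.congr_fun (hφ v) (Pi.single ⟨t, ht⟩ 1)) ⟨s, hs⟩
  change ((stdRep n j k).f v (φ v (Pi.single ⟨t, ht⟩ 1))) ⟨s, hs⟩
    = (φ (v + 1) ((stdRep n i ℓ).f v (Pi.single ⟨t, ht⟩ 1))) ⟨s, hs⟩ at H
  rw [f_single i ℓ v t ht] at H
  by_cases h : t.1 + 1 < ℓ
  · rw [dif_pos h] at H
    rw [dif_pos h]
    exact H
  · rw [dif_neg h] at H
    rw [dif_neg h]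
    erw [map_zero] at H
    exact H

lemma Fmap_apply (c : HCoef i j ℓ k) (v : ZMod n)
    (g : (stdRep n i ℓ).V v) (s : Fin k) (hs : j + (s.1 : ZMod n) = v) :
    Fmap i j ℓ k c v g ⟨s, hs⟩
      = ∑ t ∈ Finset.range ℓ, Fsummand i j ℓ k c v g s hs t := rfl

lemma Fmap_mem (hℓ : 0 < ℓ) (hk : 0 < k) (c : HCoef i j ℓ k) :
    Fmap i j ℓ k c ∈ (stdRep n i ℓ).homSubmodule (stdRep n j k) := by
  intro v
  apply LinearMap.ext
  intro g
  funext sidx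
  obtain ⟨⟨sv, hsv⟩, hs⟩ := sidx
  simp only [LinearMap.comp_apply]
  obtain ⟨m, hm⟩ : ∃ m, ℓ = m + 1 := ⟨ℓ - 1, by omega⟩
  have hrange : Finset.range ℓ = Finset.range (m + 1) := by rw [hm]
  set y := (stdRep n i ℓ).f v g with hy
  have hRHS : Fmap i j ℓ k c (v + 1) y ⟨⟨sv, hsv⟩, hs⟩
      = ∑ x ∈ Finset.range m,
          Fsummand i j ℓ k c (v + 1) y ⟨sv, hsv⟩ hs (x + 1)
        + Fsummand i j ℓ k c (v + 1) y ⟨sv, hsv⟩ hs 0 := by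
    rw [Fmap_apply, hrange, Finset.sum_range_succ']
  have hF0 : Fsummand i j ℓ k c (v + 1) y ⟨sv, hsv⟩ hs 0 = 0 := by
    unfold Fsummand
    split
    · rename_i h
      have hy0 : y ⟨⟨0, h.1⟩, h.2⟩ = 0 := rfl
      rw [hy0, mul_zero]
    · rfl
  rw [hRHS, hF0, add_zero]
  by_cases h0 : sv = 0
  · -- left side is zero
    have hL : (stdRep n j k).f v (Fmap i j ℓ k c v g) ⟨⟨sv, hsv⟩, hs⟩ = 0 := by
      subst h0; rfl
    rw [hL]
    symm
    apply Finset.sum_eq_zero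
    intro x hx
    unfold Fsummand
    split
    · rename_i h
      rw [ent_zero_right i j ℓ k c x h.1 ⟨sv, hsv⟩ h0, zero_mul]
    · rfl
  · -- left side: shift the sum
    have h1 : (1 : ℕ) ≤ sv := Nat.one_le_iff_ne_zero.mpr h0
    have hsv1 : sv - 1 < k := by omega
    have hs' : j + ((sv - 1 : ℕ) : ZMod n) = v := by
      rw [Nat.cast_sub h1, Nat.cast_one]
      linear_combination hs
    have hL : (stdRep n j k).f v (Fmap i j ℓ k c v g) ⟨⟨sv, hsv⟩, hs⟩
        = Fmap i j ℓ k c v g ⟨⟨sv - 1, hsv1⟩, hs'⟩ := by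
      show dite _ _ _ = _
      rw [dif_pos h0]
    rw [hL, Fmap_apply, hrange, Finset.sum_range_succ]
    have hlast : Fsummand i j ℓ k c v g ⟨sv - 1, hsv1⟩ hs' m = 0 := by
      unfold Fsummand
      split
      · rename_i h
        rw [ent_top i j ℓ k c m h.1 (by omega) ⟨sv - 1, hsv1⟩ (by
            show sv - 1 + 1 < k; omega), zero_mul]
      · rfl
    rw [hlast, add_zero]
    refine Finset.sum_congr rfl fun x hx => ?_
    have hxm : x < m := Finset.mem_range.mp hx
    by_cases hcond : i + ((x : ℕ) : ZMod n) = v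
    · have hcond' : i + (((x : ℕ) + 1 : ℕ) : ZMod n) = v + 1 := by
        push_cast
        rw [← hcond]
        push_cast
        ring
      unfold Fsummand
      rw [dif_pos (⟨by omega, hcond⟩ : x < ℓ ∧ i + ((x : ℕ) : ZMod n) = v),
        dif_pos (⟨by omega, hcond'⟩ : x + 1 < ℓ ∧ i + (((x + 1 : ℕ)) : ZMod n) = v + 1)]
      have hyg : y ⟨⟨x + 1, by omega⟩, hcond'⟩ = g ⟨⟨x, by omega⟩, hcond⟩ := rfl
      rw [hyg]
      have hent := ent_succ i j ℓ k c x (by omega) ⟨sv, hsv⟩ h0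
        (hs.trans hcond'.symm) (hs'.trans hcond.symm)
      rw [hent]
    · unfold Fsummand
      rw [dif_neg (by
          rintro ⟨-, hc⟩
          exact hcond hc),
        dif_neg (by
          rintro ⟨-, hc⟩
          apply hcond
          push_cast at hc
          linear_combination hc)]

/-- Evaluation of a morphism on the canonical coefficients. -/
noncomputable def Emap (hℓ : 0 < ℓ) (hk : 0 < k) :
    ((stdRep n i ℓ).homSubmodule (stdRep n j k)) →ₗ[ℂ]
      ({t : Fin (min ℓ k) // i + (t.1 : ZMod n) = j + (k : ZMod n) - 1} → ℂ) where
  toFun φ t' :=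
    aph i j ℓ k φ.1 i ⟨0, hℓ⟩ ⟨k - 1 - t'.1.1, by omega⟩
      (by simp) (by
        have hlt : t'.1.1 < min ℓ k := t'.1.isLt
        have h1 : 1 + t'.1.1 ≤ k := by omega
        have e1 : k - 1 - t'.1.1 = k - (1 + t'.1.1) := by omega
        show j + ((k - 1 - t'.1.1 : ℕ) : ZMod n) = i
        rw [e1, Nat.cast_sub h1, Nat.cast_add, Nat.cast_one]
        linear_combination -t'.2)
  map_add' φ ψ := by
    funext t'
    simp only [aph, Submodule.coe_add, Pi.add_apply, LinearMap.add_apply]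
    rfl
  map_smul' r φ := by
    funext t'
    simp only [aph, SetLike.val_smul, Pi.smul_apply, LinearMap.smul_apply,
      RingHom.id_apply]
    rfl

lemma aph_dead (φ : ∀ v, (stdRep n i ℓ).V v →ₗ[ℂ] (stdRep n j k).V v)
    (hφ : φ ∈ (stdRep n i ℓ).homSubmodule (stdRep n j k)) :
    ∀ d t s (ht : t < ℓ) (hs : s < k) (v : ZMod n)
      (htv : i + ((t : ℕ) : ZMod n) = v) (hsv : j + ((s : ℕ) : ZMod n) = v),
      ℓ - 1 - t = d → ℓ + s < k + t →
      aph i j ℓ k φ v ⟨t, ht⟩ ⟨s, hs⟩ htv hsv = 0 := by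
  intro d
  induction d with
  | zero =>
    intro t s ht hs v htv hsv hd hks
    have hs1 : s + 1 < k := by omega
    have H := rel i j ℓ k φ hφ v ⟨t, ht⟩ ⟨s + 1, hs1⟩ htv
      (by push_cast; linear_combination hsv)
    rw [dif_pos (show ((⟨s + 1, hs1⟩ : Fin k)).1 ≠ 0 from Nat.succ_ne_zero s),
      dif_neg (show ¬(t + 1 < ℓ) from by omega)] at H
    exact H
  | succ d ih =>
    intro t s ht hs v htv hsv hd hks
    have ht1 : t + 1 < ℓ := by omega
    have hs1 : s + 1 < k := by omega
    have H := rel i j ℓ k φ hφ v ⟨t, ht⟩ ⟨s + 1, hs1⟩ htv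
      (by push_cast; linear_combination hsv)
    rw [dif_pos (show ((⟨s + 1, hs1⟩ : Fin k)).1 ≠ 0 from Nat.succ_ne_zero s),
      dif_pos (show ((⟨t, ht⟩ : Fin ℓ)).1 + 1 < ℓ from ht1)] at H
    refine H.trans (ih (t + 1) (s + 1) ht1 hs1 (v + 1)
      (by push_cast; linear_combination htv)
      (by push_cast; linear_combination hsv) (by omega) (by omega))

lemma aph_all_zero (hℓ : 0 < ℓ) (hk : 0 < k)
    (φ : ∀ v, (stdRep n i ℓ).V v →ₗ[ℂ] (stdRep n j k).V v)
    (hφ : φ ∈ (stdRep n i ℓ).homSubmodule (stdRep n j k))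
    (hE : Emap i j ℓ k hℓ hk ⟨φ, hφ⟩ = 0) :
    ∀ t s (ht : t < ℓ) (hs : s < k) (v : ZMod n)
      (htv : i + ((t : ℕ) : ZMod n) = v) (hsv : j + ((s : ℕ) : ZMod n) = v),
      aph i j ℓ k φ v ⟨t, ht⟩ ⟨s, hs⟩ htv hsv = 0 := by
  intro t
  induction t with
  | zero =>
    intro s ht hs v htv hsv
    by_cases hcase : k ≤ ℓ + s
    · have hvi : v = i := by rw [← htv]; simp
      have hlt : k - 1 - s < min ℓ k := by omega
      have key := congrFun hE ⟨⟨k - 1 - s, hlt⟩, by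
        have e1 : k - 1 - s = k - (1 + s) := by omega
        show i + ((k - 1 - s : ℕ) : ZMod n) = j + (k : ZMod n) - 1
        rw [e1, Nat.cast_sub (by omega), Nat.cast_add, Nat.cast_one]
        linear_combination -hsv - hvi⟩
      have step : aph i j ℓ k φ v ⟨0, ht⟩ ⟨s, hs⟩ htv hsv
          = aph i j ℓ k φ i ⟨0, hℓ⟩ ⟨k - 1 - (k - 1 - s), by omega⟩
            (by simp) (by
              show j + ((k - 1 - (k - 1 - s) : ℕ) : ZMod n) = i
              rw [show (k - 1 - (k - 1 - s) : ℕ) = s from by omega]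
              linear_combination hsv + hvi) :=
        aph_congr i j ℓ k φ hvi rfl
          (Fin.ext (show s = k - 1 - (k - 1 - s) from by omega)) _ _ _ _
      exact step.trans key
    · exact aph_dead i j ℓ k φ hφ (ℓ - 1) 0 s ht hs v htv hsv (by omega) (by omega)
  | succ t iht =>
    intro s ht hs v htv hsv
    have htv' : i + ((t : ℕ) : ZMod n) = v - 1 := by
      push_cast at htv; linear_combination htv
    rcases Nat.eq_zero_or_pos s with h0 | hsp
    · subst h0
      have H := rel i j ℓ k φ hφ (v - 1) ⟨t, by omega⟩ ⟨0, hk⟩ htv'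
        (by linear_combination hsv)
      rw [dif_neg (show ¬((0 : ℕ) ≠ 0) from fun hne => hne rfl),
        dif_pos (show ((⟨t, by omega⟩ : Fin ℓ)).1 + 1 < ℓ from ht)] at H
      exact ((aph_congr i j ℓ k φ (show v = v - 1 + 1 from by ring) rfl rfl
        _ _ _ _).trans H.symm)
    · have H := rel i j ℓ k φ hφ (v - 1) ⟨t, by omega⟩ ⟨s, hs⟩ htv'
        (by linear_combination hsv)
      rw [dif_pos (show s ≠ 0 from by omega),
        dif_pos (show ((⟨t, by omega⟩ : Fin ℓ)).1 + 1 < ℓ from ht)] at H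
      have hzero := iht (s - 1) (by omega) (by omega) (v - 1) htv'
        (by rw [Nat.cast_sub (by omega : (1:ℕ) ≤ s), Nat.cast_one]
            linear_combination hsv)
      exact (aph_congr i j ℓ k φ (show v = v - 1 + 1 from by ring) rfl rfl
        _ _ _ _).trans (H.symm.trans hzero)

lemma Emap_injective (hℓ : 0 < ℓ) (hk : 0 < k) :
    Function.Injective (Emap i j ℓ k hℓ hk) := by
  rw [injective_iff_map_eq_zero]
  rintro ⟨φ, hφ⟩ hE
  have hz := aph_all_zero i j ℓ k hℓ hk φ hφ hE
  apply Subtype.ext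
  show φ = 0
  funext v
  apply LinearMap.ext
  intro g
  funext sidx
  obtain ⟨s, hs⟩ := sidx
  have hg : g = ∑ u : {u : Fin ℓ // i + (u.1 : ZMod n) = v},
      g u • (Pi.single u 1 : {u : Fin ℓ // i + (u.1 : ZMod n) = v} → ℂ) := by
    funext w
    rw [Finset.sum_apply]
    rw [Finset.sum_eq_single w]
    · rw [Pi.smul_apply, Pi.single_eq_same, smul_eq_mul, mul_one]
    · intro b _ hb
      rw [Pi.smul_apply, Pi.single_eq_of_ne (fun hc => hb hc.symm), smul_zero]
    · intro h
      exact absurd (Finset.mem_univ w) h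
  rw [hg]
  erw [map_sum, Finset.sum_apply]
  apply Finset.sum_eq_zero
  rintro ⟨u, hu⟩ -
  erw [map_smul, Pi.smul_apply]
  have h0 : φ v (Pi.single (⟨u, hu⟩ : {u : Fin ℓ // i + (u.1 : ZMod n) = v}) 1)
      ⟨s, hs⟩ = 0 :=
    hz u.1 s.1 u.isLt s.isLt v hu hs
  rw [h0, smul_zero]

lemma Emap_surjective (hℓ : 0 < ℓ) (hk : 0 < k) :
    Function.Surjective (Emap i j ℓ k hℓ hk) := by
  intro c
  refine ⟨⟨Fmap i j ℓ k c, Fmap_mem i j ℓ k hℓ hk c⟩, ?_⟩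
  funext t'
  show Fmap i j ℓ k c i (Pi.single ⟨⟨0, hℓ⟩, by simp⟩ 1) _ = c t'
  erw [Fmap_apply]
  rw [Finset.sum_eq_single 0]
  · unfold Fsummand
    rw [dif_pos (⟨hℓ, by simp⟩ : (0 : ℕ) < ℓ ∧ i + (((0 : ℕ)) : ZMod n) = i)]
    rw [Pi.single_apply, if_pos rfl, mul_one]
    unfold ent
    rw [dif_pos (⟨Nat.zero_le _, by
        have := t'.1.isLt
        omega⟩ : (0 : ℕ) ≤ k - 1 - t'.1.1 ∧ k + (0 : ℕ) ≤ ℓ + (k - 1 - t'.1.1))]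
    refine congrArg c (Subtype.ext (Fin.ext ?_))
    show k - 1 - (k - 1 - t'.1.1 - 0) = t'.1.1
    have := t'.1.isLt
    omega
  · intro b _ hb0
    unfold Fsummand
    split
    · rename_i h
      rw [Pi.single_apply,
        if_neg (fun hc => hb0 (by simpa using congrArg (fun z => z.1.1) hc)),
        mul_zero]
    · rfl
  · intro h
    exact absurd (Finset.mem_range.mpr hℓ) h

end HuberyAux

/-- Hubery's formula: `dim Hom(U_i(ℓ), U_j(k))` equals the number of occurrences of the
residue `j + k - 1` among the residues `i, i+1, …, i+m-1` where `m = min ℓ k`. -/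
theorem hom_dim_indecomposables (n : ℕ) [NeZero n] (i j : ZMod n) (ℓ k : ℕ)
    (hℓ : 0 < ℓ) (hk : 0 < k) :
    (stdRep n i ℓ).homDim (stdRep n j k) =
      (Finset.univ.filter
        fun t : Fin (min ℓ k) => i + (t.1 : ZMod n) = j + (k : ZMod n) - 1).card := by
  have e := LinearEquiv.ofBijective (Emap i j ℓ k hℓ hk)
    ⟨Emap_injective i j ℓ k hℓ hk, Emap_surjective i j ℓ k hℓ hk⟩
  show Module.finrank ℂ ((stdRep n i ℓ).homSubmodule (stdRep n j k)) = _
  rw [e.finrank_eq, Module.finrank_fintype_fun_eq_card, Fintype.card_subtype]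
end

section
/- Let M be any nilpotent representation of the equioriented cycle Δ_n satisfying the relations that all paths of length N act as zero, with dimension vector e. Then for every vertex i ∈ ℤ/nℤ, the dimension of Hom(M, U_i(N)) equals e_{i+N-1}, the entry of the dimension vector of M at vertex i+N-1 (mod n). -/
open Module

lemma CycRep.castV_comp {n : ℕ} (U : CycRep n) {a b c : ZMod n} (h1 : a = b) (h2 : b = c)
    (x : U.V a) : U.castV h2 (U.castV h1 x) = U.castV (h1.trans h2) x := by
  subst h1; subst h2; rfl

lemma CycRep.castV_self {n : ℕ} (U : CycRep n) {a : ZMod n} (h : a = a) (x : U.V a) :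
    U.castV h x = x := rfl

lemma CycRep.castV_eq_zero {n : ℕ} (U : CycRep n) {a b : ZMod n} (h : a = b) (x : U.V a)
    (hx : U.castV h x = 0) : x = 0 := by subst h; exact hx

lemma CycRep.pathMap_succ {n : ℕ} (M : CycRep n) (k : ℕ) (j : ZMod n) (m : M.V j) :
    M.pathMap (k+1) j m =
      M.castV (show j + 1 + (k : ZMod n) = j + ((k + 1 : ℕ) : ZMod n) by push_cast; ring)
        (M.pathMap k (j+1) (M.f j m)) := rfl

lemma keyB {n : ℕ} (ℓ : ℕ) (M : CycRep n) (i : ZMod n)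
    (φ : ∀ j, M.V j →ₗ[ℂ] (stdRep n i (ℓ+1)).V j)
    (hφ : ∀ j, ((stdRep n i (ℓ+1)).f j).comp (φ j) = (φ (j+1)).comp (M.f j)) :
    ∀ (k : ℕ), k ≤ ℓ → ∀ (j : ZMod n) (m : M.V j)
      (t : ℕ) (ht : t < ℓ+1) (hst : i + (t : ZMod n) = j) (_ : t = ℓ - k)
      (h : j + ((k : ℕ) : ZMod n) = i + ((ℓ:ℕ) : ZMod n)),
      φ j m ⟨⟨t, ht⟩, hst⟩ =
      φ (i + ((ℓ:ℕ) : ZMod n)) (M.castV h (M.pathMap k j m)) ⟨⟨ℓ, Nat.lt_succ_self ℓ⟩, rfl⟩ := by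
  intro k
  induction k with
  | zero =>
    intro _ j m t ht hst hs h
    have htl : t = ℓ := by omega
    subst htl
    subst hst
    have harg : M.castV h (M.pathMap 0 (i + (t : ZMod n)) m) = m := by
      show M.castV h (M.castV _ m) = m
      rw [M.castV_comp]
      rfl
    rw [harg]
  | succ k ih =>
    intro hk j m t ht hst hs h
    have ht1 : t + 1 < ℓ + 1 := by omega
    have hst1 : i + ((t+1 : ℕ) : ZMod n) = j + 1 := by push_cast; rw [← hst]; push_cast; ring
    have step := congrFun (LinearMap.congr_fun (hφ j) m) ⟨⟨t+1, ht1⟩, hst1⟩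
    have hL : ((stdRep n i (ℓ+1)).f j) (φ j m) ⟨⟨t+1, ht1⟩, hst1⟩ = φ j m ⟨⟨t, ht⟩, hst⟩ := by
      show (if h : t + 1 ≠ 0 then _ else 0) = _
      rw [dif_pos (by omega : t + 1 ≠ 0)]
      rfl
    have h' : (j + 1) + ((k : ℕ) : ZMod n) = i + ((ℓ:ℕ) : ZMod n) := by
      rw [← h]; push_cast; ring
    have := ih (by omega) (j+1) (M.f j m) (t+1) ht1 hst1 (by omega) h'
    simp only [LinearMap.comp_apply] at step
    rw [hL] at step
    rw [step, this]
    congr 1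
    rw [M.pathMap_succ, M.castV_comp]

lemma CycRep.castV_pathMap_zero {n : ℕ} (M : CycRep n) (k : ℕ) (hk : k = 0)
    {j j2 : ZMod n} (h : j + ((k : ℕ) : ZMod n) = j2) (m : M.V j) (hj : j = j2) :
    M.castV h (M.pathMap k j m) = M.castV hj m := by
  subst hk; subst hj
  show M.castV h (M.castV _ m) = _
  rw [M.castV_comp]

lemma CycRep.castV_pathMap_succ {n : ℕ} (M : CycRep n) (a b : ℕ) (hab : a = b + 1)
    {j j2 : ZMod n} (h1 : j + ((a : ℕ) : ZMod n) = j2)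
    (h2 : (j + 1) + ((b : ℕ) : ZMod n) = j2) (m : M.V j) :
    M.castV h1 (M.pathMap a j m) = M.castV h2 (M.pathMap b (j + 1) (M.f j m)) := by
  subst hab
  rw [M.pathMap_succ, M.castV_comp]


/-- For any nilpotent representation `M` of the cycle bounded by `N` (all paths of length `N`
act as zero), `dim Hom(M, U_i(N))` equals the entry of the dimension vector of `M` at
vertex `i + N - 1`. -/
theorem hom_dim_to_max_indecomposable (n N : ℕ) [NeZero n] (hN : 0 < N) (M : CycRep n)
    [∀ j, FiniteDimensional ℂ (M.V j)]
    (hnil : ∀ j, M.pathMap N j = 0) (i : ZMod n) :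
    M.homDim (stdRep n i N) = M.dimVec (i + (N : ZMod n) - 1) := by
  obtain ⟨ℓ, rfl⟩ : ∃ ℓ, N = ℓ + 1 := ⟨N - 1, by omega⟩
  set j' : ZMod n := i + ((ℓ : ℕ) : ZMod n) with hj'def
  have hj' : i + (((ℓ+1 : ℕ)) : ZMod n) - 1 = j' := by rw [hj'def]; push_cast; ring
  rw [hj']
  have hidxlt : ℓ < ℓ + 1 := Nat.lt_succ_self ℓ
  let T : (M.homSubmodule (stdRep n i (ℓ+1))) →ₗ[ℂ] (M.V j' →ₗ[ℂ] ℂ) :=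
    { toFun := fun φ => (LinearMap.proj ⟨⟨ℓ, hidxlt⟩, rfl⟩) ∘ₗ (φ.1 j')
      map_add' := by intro a b; ext m; rfl
      map_smul' := by intro c a; ext m; rfl }
  have hTapp : ∀ (φ : M.homSubmodule (stdRep n i (ℓ+1))) (m : M.V j'),
      T φ m = φ.1 j' m ⟨⟨ℓ, hidxlt⟩, rfl⟩ := fun _ _ => rfl
  have hbij : Function.Bijective T := by
    constructor
    · rw [injective_iff_map_eq_zero]
      intro φ hφ0
      apply Subtype.ext
      funext j
      apply LinearMap.ext
      intro m
      funext s
      obtain ⟨⟨t, ht⟩, hst⟩ := s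
      have hh : j + (((ℓ - t : ℕ)) : ZMod n) = j' := by
        rw [← hst, Nat.cast_sub (by omega : t ≤ ℓ)]; push_cast; ring
      have hkey := keyB ℓ M i φ.1 φ.2 (ℓ - t) (by omega) j m t ht hst (by omega) hh
      rw [hkey]
      have h0 := LinearMap.congr_fun hφ0 (M.castV hh (M.pathMap (ℓ - t) j m))
      rw [hTapp] at h0
      rw [h0]
      rfl
    · intro μ
      have pf : ∀ (j : ZMod n) (s : {t : Fin (ℓ+1) // i + (t.1 : ZMod n) = j}),
          j + (((ℓ - s.1.1 : ℕ)) : ZMod n) = j' := by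
        intro j s
        obtain ⟨⟨t, ht⟩, hst⟩ := s
        show j + (((ℓ - t : ℕ)) : ZMod n) = j'
        rw [← hst, Nat.cast_sub (by omega : t ≤ ℓ)]; push_cast; ring
      refine ⟨⟨fun j => LinearMap.pi
          (fun s => μ ∘ₗ (M.castV (pf j s)) ∘ₗ (M.pathMap (ℓ - s.1.1) j)), ?_⟩, ?_⟩
      · intro j
        apply LinearMap.ext; intro m
        funext s
        obtain ⟨⟨t, ht⟩, hst⟩ := s
        simp only [LinearMap.comp_apply, LinearMap.pi_apply, stdRep, LinearMap.coe_mk,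
          AddHom.coe_mk]
        cases t with
        | zero =>
          show (if h : (0:ℕ) ≠ 0 then (0:ℂ) else 0) = _
          rw [dif_neg (by omega : ¬ ((0:ℕ) ≠ 0))]
          have h1 : M.pathMap (ℓ + 1) j m = 0 := by rw [hnil j]; rfl
          rw [M.pathMap_succ] at h1
          have h2 : M.pathMap ℓ (j + 1) (M.f j m) = 0 := M.castV_eq_zero _ _ h1
          show (0 : ℂ) = μ ((M.castV (pf (j+1) ⟨⟨0, ht⟩, hst⟩)) (M.pathMap ℓ (j + 1) (M.f j m)))
          rw [h2, map_zero, map_zero]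
        | succ t' =>
          show (if h : (t' + 1 : ℕ) ≠ 0 then _ else 0) = _
          rw [dif_pos (by omega : (t' + 1 : ℕ) ≠ 0)]
          exact congrArg μ (M.castV_pathMap_succ (ℓ - (t' + 1 - 1)) (ℓ - (t' + 1))
            (by omega) _ _ m)
      · apply LinearMap.ext; intro m
        rw [hTapp]
        show (LinearMap.pi fun s => μ ∘ₗ (M.castV (pf j' s)) ∘ₗ (M.pathMap (ℓ - s.1.1) j'))
            m ⟨⟨ℓ, hidxlt⟩, rfl⟩ = μ m
        have hz := M.castV_pathMap_zero (ℓ - ℓ) (by omega)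
          (pf j' ⟨⟨ℓ, hidxlt⟩, rfl⟩) m rfl
        simp only [LinearMap.pi_apply, LinearMap.comp_apply]
        rw [hz]
        rfl
  have hfr := (LinearEquiv.ofBijective T hbij).finrank_eq
  rw [CycRep.homDim, hfr, Module.finrank_linearMap, Module.finrank_self, mul_one, CycRep.dimVec]
end

section
/- Let ω, n be positive integers and let M_ω be the representation of the cyclic quiver Δ_n with vector space ℂ^{2ωn} at every vertex and with each arrow map equal to s_1 ∘ pr_{ωn}, where pr_{ωn} kills the ωn-th standard basis vector and s_1 shifts basis vector e_j to e_{j+1} (and e_{2ωn} to 0). Then M_ω is isomorphic, as a Δ_n-representation, to ⊕_{j∈ℤ/nℤ} U(j; ωn) ⊗ ℂ². -/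
open Module

/-- The representation `M_ω` of `Δ_n`: the space `ℂ^{2ωn}` at every vertex, every arrow acting
by `s_1 ∘ pr_{ωn}` (kill the `ωn`-th basis vector, then shift indices up by one). -/
noncomputable def flagRep (n ω : ℕ) : CycRep n where
  V _ := Fin (2 * ω * n) → ℂ
  f _ :=
    { toFun := fun g s =>
        if h : s.1 ≠ 0 ∧ s.1 ≠ ω * n then g ⟨s.1 - 1, by have := s.isLt; omega⟩ else 0
      map_add' := by
        intro a b
        funext s
        by_cases h : s.1 ≠ 0 ∧ s.1 ≠ ω * n <;> simp [h]
      map_smul' := by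
        intro c a
        funext s
        by_cases h : s.1 ≠ 0 ∧ s.1 ≠ ω * n <;> simp [h] }

theorem eval_congr {n ℓ : ℕ} {j : ZMod n}
    (h : ∀ p : ZMod n × Fin 2,
      ({t : Fin ℓ // p.1 - ((ℓ : ℕ) : ZMod n) + 1 + (t.1 : ZMod n) = j} → ℂ))
    {a a' : ZMod n} (b : Fin 2) {t t' : Fin ℓ} (ha : a = a') (htt : t.1 = t'.1)
    {H H'} : h (a, b) ⟨t, H⟩ = h (a', b) ⟨t', H'⟩ := by
  subst ha
  cases Fin.ext htt
  rfl

noncomputable def phi (n ω : ℕ) (j : ZMod n) :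
    (Fin (2 * ω * n) → ℂ) ≃ₗ[ℂ]
      ∀ p : ZMod n × Fin 2,
        ({t : Fin (ω * n) // p.1 - ((ω * n : ℕ) : ZMod n) + 1 + (t.1 : ZMod n) = j} → ℂ) where
  toFun g p t := g ⟨t.1.1 + p.2.1 * (ω * n), by
    have h1 := t.1.isLt
    have h2 := p.2.isLt
    have h3 : p.2.1 * (ω * n) = 0 ∨ p.2.1 * (ω * n) = ω * n := by
      have : p.2.1 = 0 ∨ p.2.1 = 1 := by omega
      rcases this with h | h <;> simp [h]
    have h4 : 2 * ω * n = ω * n + ω * n := by ring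
    omega⟩
  map_add' a b := rfl
  map_smul' c a := rfl
  invFun h m :=
    if hm : m.1 < ω * n then
      h (j - (m.1 : ZMod n) - 1 + ((ω * n : ℕ) : ZMod n), 0)
        ⟨⟨m.1, hm⟩, by ring⟩
    else
      h (j - ((m.1 - ω * n : ℕ) : ZMod n) - 1 + ((ω * n : ℕ) : ZMod n), 1)
        ⟨⟨m.1 - ω * n, by
          have := m.isLt
          have h4 : 2 * ω * n = ω * n + ω * n := by ring
          omega⟩, by ring⟩
  left_inv g := by
    funext m
    by_cases hm : m.1 < ω * n
    · simp only [dif_pos hm]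
      exact congrArg g (Fin.ext (by simp))
    · simp only [dif_neg hm]
      exact congrArg g (Fin.ext (by simp; omega))
  right_inv h := by
    funext p t
    obtain ⟨a, b⟩ := p
    obtain ⟨⟨tv, htl⟩, ht⟩ := t
    fin_cases b
    · simp only []
      rw [dif_pos (show tv + 0 * (ω * n) < ω * n by omega)]
      exact eval_congr h 0 (by push_cast at ht ⊢; linear_combination -ht) (by simp)
    · simp only []
      rw [dif_neg (show ¬ (tv + 1 * (ω * n) < ω * n) by omega)]
      refine eval_congr h 1 ?_ (by simp)
      have hv : tv + 1 * (ω * n) - ω * n = tv := by omega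
      rw [hv]
      push_cast at ht ⊢
      linear_combination -ht

/-- `M_ω ≅ ⊕_{j ∈ ℤ/n} U(j; ωn) ⊗ ℂ²`. -/
theorem flagRep_iso (n ω : ℕ) [NeZero n] (hω : 0 < ω) :
    (flagRep n ω).Iso
      (CycRep.dSum fun p : ZMod n × Fin 2 => endRep n (ω * n) p.1) := by
  have hn : 0 < n := Nat.pos_of_ne_zero (NeZero.ne n)
  have hl : 0 < ω * n := Nat.mul_pos hω hn
  refine ⟨fun i => phi n ω i, ?_⟩
  intro i v
  funext p t
  obtain ⟨a, b⟩ := p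
  obtain ⟨⟨tv, htl⟩, ht⟩ := t
  have hb := b.isLt
  have hb2 : b.1 * (ω * n) = 0 ∨ b.1 * (ω * n) = ω * n := by
    have : b.1 = 0 ∨ b.1 = 1 := by omega
    rcases this with h | h <;> simp [h]
  have h4 : 2 * ω * n = ω * n + ω * n := by ring
  show phi n ω (i+1) ((flagRep n ω).f i v) (a, b) _ = (endRep n (ω * n) a).f i (phi n ω i v (a, b)) _
  simp only [CycRep.dSum, endRep, stdRep, flagRep, phi, LinearMap.pi_apply,
    LinearMap.comp_apply, LinearMap.proj_apply, LinearMap.coe_mk, AddHom.coe_mk,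
    LinearEquiv.coe_mk]
  show (if h : (tv + b.1 * (ω * n)) ≠ 0 ∧ (tv + b.1 * (ω * n)) ≠ ω * n then
      v ⟨tv + b.1 * (ω * n) - 1, by omega⟩ else 0) =
    (if h : tv ≠ 0 then v ⟨tv - 1 + b.1 * (ω * n), by omega⟩ else 0)
  by_cases h0 : tv = 0
  · rw [dif_neg (by omega), dif_neg (by omega)]
  · rw [dif_pos (by omega), dif_pos (by omega)]
    exact congrArg v (Fin.ext (by simp; omega))
end
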